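/- Let p ≥ 1711 be a prime with −1 a quadratic residue and 2, 3 non-residues mod p, and let R' = R \ {(p+3)/2, (p−3)/2} where R is the set of quadratic residues mod p. Consider the digraph D on vertex set R' with edges: (x,y) and (x,z) for every triple x,y,z ∈ R' with 2x = y + z ≠ 3; and (1,y),(1,z) whenever y + z = 3 with y ≠ z in R'. Then D is strongly connected. -/

import Mathlib

open Finset

set_option maxHeartbeats 1000000

lemma jacobi_aux {F : Type*} [Field F] [Fintype F] [DecidableEq F]
    (hF : ringChar F ≠ 2) {c : F} (hc : c ≠ 0) :
    ∑ m : F, quadraticChar F m * quadraticChar F (c - m) = - quadraticChar F (-1) := by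
  have key : ∀ m : F, m ≠ 0 → quadraticChar F m * quadraticChar F (c - m)
      = quadraticChar F (c * m⁻¹ - 1) := by
    intro m hm
    have h : c - m = m * (c * m⁻¹ - 1) := by field_simp
    rw [h, map_mul, ← mul_assoc, ← sq, quadraticChar_sq_one hm, one_mul]
  have h0 : ∑ m : F, quadraticChar F m * quadraticChar F (c - m)
      = ∑ m ∈ univ.erase (0 : F), quadraticChar F (c * m⁻¹ - 1) := by
    rw [← Finset.sum_erase_add univ _ (Finset.mem_univ (0:F))]
    simp only [quadraticChar_zero, zero_mul, add_zero]
    exact Finset.sum_congr rfl fun m hm => key m (Finset.ne_of_mem_erase hm)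
  have h1 : ∑ m ∈ univ.erase (0 : F), quadraticChar F (c * m⁻¹ - 1)
      = ∑ u ∈ univ.erase (0 : F), quadraticChar F (u - 1) := by
    apply Finset.sum_nbij' (fun m => c * m⁻¹) (fun u => c * u⁻¹)
    · intro m hm
      simp only [mem_erase, mem_univ, and_true] at hm ⊢
      exact mul_ne_zero hc (inv_ne_zero hm)
    · intro u hu
      simp only [mem_erase, mem_univ, and_true] at hu ⊢
      exact mul_ne_zero hc (inv_ne_zero hu)
    · intro m hm
      simp only [mem_erase, mem_univ, and_true] at hm
      field_simp
    · intro u hu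
      simp only [mem_erase, mem_univ, and_true] at hu
      field_simp
    · intro m hm; rfl
  have h2 : ∑ u ∈ univ.erase (0 : F), quadraticChar F (u - 1)
      = (∑ u : F, quadraticChar F (u - 1)) - quadraticChar F (-1) := by
    rw [← Finset.sum_erase_add univ _ (Finset.mem_univ (0:F))]
    simp
  have h3 : ∑ u : F, quadraticChar F (u - 1) = 0 := by
    rw [← quadraticChar_sum_zero hF]
    exact Fintype.sum_equiv (Equiv.subRight (1 : F)) _ _ (fun u => rfl)
  rw [h0, h1, h2, h3, zero_sub]

lemma jacobi_aux2 {F : Type*} [Field F] [Fintype F] [DecidableEq F]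
    (hF : ringChar F ≠ 2) {d : F} (hd : d ≠ 0) :
    ∑ m : F, quadraticChar F m * quadraticChar F (m - d) = -1 := by
  have h : ∀ m : F, quadraticChar F (m - d)
      = quadraticChar F (-1) * quadraticChar F (d - m) := by
    intro m
    rw [← map_mul]
    congr 1; ring
  calc ∑ m : F, quadraticChar F m * quadraticChar F (m - d)
      = quadraticChar F (-1) * ∑ m : F, quadraticChar F m * quadraticChar F (d - m) := by
        rw [Finset.mul_sum]; exact Finset.sum_congr rfl fun m _ => by rw [h m]; ring
    _ = quadraticChar F (-1) * (- quadraticChar F (-1)) := by rw [jacobi_aux hF hd]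
    _ = -1 := by
        have : quadraticChar F (-1) * quadraticChar F (-1) = 1 := by
          rw [← map_mul]; norm_num
        linarith [this]

lemma diag_aux {F : Type*} [Field F] [Fintype F] [DecidableEq F] :
    ∑ t : F, quadraticChar F t * quadraticChar F t = (Fintype.card F : ℤ) - 1 := by
  have h : ∀ t : F, quadraticChar F t * quadraticChar F t
      = 1 - (if t = 0 then 1 else 0) := by
    intro t
    by_cases ht : t = 0
    · simp [ht]
    · have := quadraticChar_dichotomy ht
      rcases this with h' | h' <;> simp [h', ht]
  rw [Finset.sum_congr rfl fun t _ => h t, Finset.sum_sub_distrib]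
  simp [Finset.sum_ite_eq' (univ : Finset F) (0 : F) (fun _ => (1:ℤ))]

set_option maxHeartbeats 1000000

/-- `a` is a (nonzero) quadratic residue in `ZMod p`. -/
def IsQR (p : ℕ) (a : ZMod p) : Prop := a ≠ 0 ∧ IsSquare a

/-- `R' = R \ {(p+3)/2, (p-3)/2}`: the quadratic residues with two elements removed. -/
def Rp' (p : ℕ) : Set (ZMod p) :=
  {a | IsQR p a ∧ a ≠ (((p + 3) / 2 : ℕ) : ZMod p) ∧ a ≠ (((p - 3) / 2 : ℕ) : ZMod p)}

lemma exists_path (p : ℕ) [Fact p.Prime] (hp : 1711 ≤ p)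
    (h1 : IsQR p (-1)) (h2 : ¬ IsQR p 2) (h3 : ¬ IsQR p 3)
    {a b : ZMod p} (ha : a ∈ Rp' p) (hb : b ∈ Rp' p) :
    ∃ m n : ZMod p, (m ∈ Rp' p ∧ 2*a - m ∈ Rp' p) ∧ (n ∈ Rp' p ∧ 2*n - b ∈ Rp' p)
      ∧ 2*m - n ∈ Rp' p := by
  classical
  have hp' : p.Prime := Fact.out
  have hodd : p % 2 = 1 := Nat.odd_iff.mp (hp'.odd_of_ne_two (by omega))
  set χ : MulChar (ZMod p) ℤ := quadraticChar (ZMod p) with hχdef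
  have hcard : (Fintype.card (ZMod p) : ℤ) = (p : ℤ) := by
    simp [ZMod.card p]
  have hchar : ringChar (ZMod p) ≠ 2 := by
    rw [ZMod.ringChar_zmod_n p]; omega
  have htwo : (2 : ZMod p) ≠ 0 := Ring.two_ne_zero hchar
  have hthree : (3 : ZMod p) ≠ 0 := by
    intro h
    have h' : ((3 : ℕ) : ZMod p) = 0 := by push_cast; exact h
    rw [ZMod.natCast_eq_zero_iff] at h'
    have := Nat.le_of_dvd (by norm_num) h'
    omega
  -- character values
  have hχ1 : χ (-1) = 1 := (quadraticChar_one_iff_isSquare h1.1).mpr h1.2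
  have hχ2 : χ 2 = -1 := quadraticChar_neg_one_iff_not_isSquare.mpr (fun hs => h2 ⟨htwo, hs⟩)
  have hχ3 : χ 3 = -1 := quadraticChar_neg_one_iff_not_isSquare.mpr (fun hs => h3 ⟨hthree, hs⟩)
  have hQR : ∀ x : ZMod p, IsQR p x ↔ χ x = 1 := by
    intro x
    constructor
    · intro hx; exact (quadraticChar_one_iff_isSquare hx.1).mpr hx.2
    · intro hx
      have hx0 : x ≠ 0 := by
        intro h0; rw [h0] at hx; simp [hχdef] at hx
      exact ⟨hx0, (quadraticChar_one_iff_isSquare hx0).mp hx⟩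
  -- the two removed points
  set b1 : ZMod p := (((p + 3) / 2 : ℕ) : ZMod p) with hb1def
  set b2 : ZMod p := (((p - 3) / 2 : ℕ) : ZMod p) with hb2def
  have hb1 : 2 * b1 = 3 := by
    have h : (p + 3) / 2 * 2 = p + 3 := Nat.div_mul_cancel (by omega)
    have h2 : ((((p + 3) / 2) * 2 : ℕ) : ZMod p) = (((p + 3 : ℕ)) : ZMod p) := by rw [h]
    push_cast at h2
    rw [ZMod.natCast_self] at h2
    linear_combination h2
  have hb2 : 2 * b2 = -3 := by
    have h : (p - 3) / 2 * 2 = p - 3 := Nat.div_mul_cancel (by omega)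
    have h2 : ((((p - 3) / 2) * 2 : ℕ) : ZMod p) = (((p - 3 : ℕ)) : ZMod p) := by rw [h]
    rw [Nat.cast_sub (by omega)] at h2
    push_cast at h2
    rw [ZMod.natCast_self] at h2
    linear_combination h2
  have hmem : ∀ x : ZMod p, x ∈ Rp' p ↔ (χ x = 1 ∧ x ≠ b1 ∧ x ≠ b2) := by
    intro x
    constructor
    · rintro ⟨hq, hx1, hx2⟩; exact ⟨(hQR x).mp hq, hx1, hx2⟩
    · rintro ⟨hq, hx1, hx2⟩; exact ⟨(hQR x).mpr hq, hx1, hx2⟩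
  have ha0 : a ≠ 0 := ha.1.1
  have hb0 : b ≠ 0 := hb.1.1
  have hχa : χ a = 1 := (hQR a).mp ha.1
  have hχb : χ b = 1 := (hQR b).mp hb.1
  have h2a : (2 : ZMod p) * a ≠ 0 := mul_ne_zero htwo ha0
  have hχ2a : χ (2 * a) = -1 := by rw [map_mul, hχ2, hχa]; ring
  have hχle : ∀ x : ZMod p, χ x ≤ 1 := by
    intro x
    by_cases hx : x = 0
    · simp [hx, hχdef]
    · rcases quadraticChar_dichotomy hx with h | h <;> rw [hχdef] at * <;> omega
  -- the four finsets
  set A : Finset (ZMod p) := univ.filter (fun m => m ∈ Rp' p ∧ (2*a - m) ∈ Rp' p) with hAdef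
  set B : Finset (ZMod p) := univ.filter (fun n => n ∈ Rp' p ∧ (2*n - b) ∈ Rp' p) with hBdef
  set A0 : Finset (ZMod p) := univ.filter (fun m => χ m = 1 ∧ χ (2*a - m) = 1) with hA0def
  set B0 : Finset (ZMod p) := univ.filter (fun n => χ n = 1 ∧ χ (2*n - b) = 1) with hB0def
  have hsum0 : ∀ c : ZMod p, ∑ m : ZMod p, χ (c - m) = 0 := by
    intro c
    rw [← quadraticChar_sum_zero hchar]
    exact Fintype.sum_equiv (Equiv.subLeft c) _ _ (fun m => rfl)
  have hcardA0 : 4 * (A0.card : ℤ) = (p : ℤ) - 1 := by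
    have hsum : ∑ m : ZMod p, (1 + χ m) * (1 + χ (2*a - m)) = (p : ℤ) - 1 := by
      have expand : ∀ m : ZMod p, (1 + χ m) * (1 + χ (2*a - m))
          = 1 + χ m + χ (2*a - m) + χ m * χ (2*a - m) := fun m => by ring
      rw [Finset.sum_congr rfl (fun m _ => expand m)]
      rw [Finset.sum_add_distrib, Finset.sum_add_distrib, Finset.sum_add_distrib]
      rw [Finset.sum_const, quadraticChar_sum_zero hchar, hsum0 (2*a),
        jacobi_aux hchar h2a, hχ1]
      simp only [nsmul_eq_mul, mul_one, Finset.card_univ, ZMod.card p]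
      ring
    have hsplit : ∑ m : ZMod p, (1 + χ m) * (1 + χ (2*a - m)) = 4 * (A0.card : ℤ) := by
      rw [← Finset.sum_filter_add_sum_filter_not univ
        (fun m => χ m = 1 ∧ χ (2*a - m) = 1)]
      have hfirst : ∑ m ∈ A0, (1 + χ m) * (1 + χ (2*a - m)) = 4 * (A0.card : ℤ) := by
        have h4 : ∀ m ∈ A0, (1 + χ m) * (1 + χ (2*a - m)) = (4 : ℤ) := by
          intro m hm
          rw [hA0def, mem_filter] at hm
          rw [hm.2.1, hm.2.2]; norm_num
        rw [Finset.sum_congr rfl h4, Finset.sum_const, nsmul_eq_mul]; ring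
      have hsecond : ∑ m ∈ univ.filter (fun m => ¬(χ m = 1 ∧ χ (2*a - m) = 1)),
          (1 + χ m) * (1 + χ (2*a - m)) = 0 := by
        apply Finset.sum_eq_zero
        intro m hm
        rw [mem_filter] at hm
        by_cases hm0 : m = 0
        · subst hm0
          rw [sub_zero, hχ2a]
          simp [hχdef]
        · by_cases hm2 : 2*a - m = 0
          · have : m = 2*a := by linear_combination -hm2
            subst this
            rw [hm2, hχ2a]
            simp [hχdef]
          · rcases quadraticChar_dichotomy hm0 with hA | hA <;>
              rcases quadraticChar_dichotomy hm2 with hB | hB <;>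
              rw [hχdef] at *
            · exact absurd ⟨hA, hB⟩ hm.2
            · rw [hB]; ring
            · rw [hA]; ring
            · rw [hA]; ring
      rw [hfirst, hsecond, add_zero]
    rw [← hsum, hsplit]
  have hcardB0 : 4 * (B0.card : ℤ) = (p : ℤ) - 1 := by
    have hinv2 : χ 2⁻¹ = -1 := by
      have h := map_mul χ 2 2⁻¹
      rw [mul_inv_cancel₀ htwo, map_one, hχ2] at h
      linarith
    have hc : (2 : ZMod p)⁻¹ * b ≠ 0 := mul_ne_zero (inv_ne_zero htwo) hb0
    have hJ : ∑ n : ZMod p, χ n * χ (2*n - b) = 1 := by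
      have hre : ∀ n : ZMod p, χ (2*n - b) = -χ (n - 2⁻¹ * b) := by
        intro n
        have : (2 : ZMod p) * n - b = 2 * (n - 2⁻¹ * b) := by
          field_simp
        rw [this, map_mul, hχ2]; ring
      calc ∑ n : ZMod p, χ n * χ (2*n - b)
          = -∑ n : ZMod p, χ n * χ (n - 2⁻¹ * b) := by
            rw [← Finset.sum_neg_distrib]
            exact Finset.sum_congr rfl fun n _ => by rw [hre n]; ring
        _ = 1 := by rw [jacobi_aux2 hchar hc]; ring
    have hsum : ∑ n : ZMod p, (1 + χ n) * (1 + χ (2*n - b)) = (p : ℤ) + 1 := by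
      have expand : ∀ n : ZMod p, (1 + χ n) * (1 + χ (2*n - b))
          = 1 + χ n + χ (2*n - b) + χ n * χ (2*n - b) := fun n => by ring
      rw [Finset.sum_congr rfl (fun n _ => expand n)]
      rw [Finset.sum_add_distrib, Finset.sum_add_distrib, Finset.sum_add_distrib]
      have hs3 : ∑ n : ZMod p, χ (2*n - b) = 0 := by
        rw [← quadraticChar_sum_zero hchar]
        exact Fintype.sum_equiv ((Equiv.mulLeft₀ (2 : ZMod p) htwo).trans
          (Equiv.subRight b)) _ _ (fun n => rfl)
      rw [Finset.sum_const, quadraticChar_sum_zero hchar, hs3, hJ]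
      simp only [nsmul_eq_mul, mul_one, Finset.card_univ, ZMod.card p]
      ring
    have hsplit : ∑ n : ZMod p, (1 + χ n) * (1 + χ (2*n - b)) = 4 * (B0.card : ℤ) + 2 := by
      rw [← Finset.sum_filter_add_sum_filter_not univ
        (fun n => χ n = 1 ∧ χ (2*n - b) = 1)]
      have hfirst : ∑ n ∈ B0, (1 + χ n) * (1 + χ (2*n - b)) = 4 * (B0.card : ℤ) := by
        have h4 : ∀ n ∈ B0, (1 + χ n) * (1 + χ (2*n - b)) = (4 : ℤ) := by
          intro n hn
          rw [hB0def, mem_filter] at hn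
          rw [hn.2.1, hn.2.2]; norm_num
        rw [Finset.sum_congr rfl h4, Finset.sum_const, nsmul_eq_mul]; ring
      have hsecond : ∑ n ∈ univ.filter (fun n => ¬(χ n = 1 ∧ χ (2*n - b) = 1)),
          (1 + χ n) * (1 + χ (2*n - b)) = 2 := by
        have h0mem : (0 : ZMod p) ∈ univ.filter (fun n => ¬(χ n = 1 ∧ χ (2*n - b) = 1)) := by
          rw [mem_filter]
          refine ⟨mem_univ _, ?_⟩
          rintro ⟨hc1, -⟩
          simp [hχdef] at hc1
        rw [Finset.sum_eq_single_of_mem 0 h0mem ?_]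
        · have hmb : χ (2 * 0 - b) = 1 := by
            have : (2 : ZMod p) * 0 - b = -1 * b := by ring
            rw [this, map_mul, hχ1, hχb]; ring
          rw [hmb]
          simp [hχdef]
        · intro n hn hn0
          rw [mem_filter] at hn
          by_cases hn2 : 2*n - b = 0
          · have hneq : n = 2⁻¹ * b := by
              field_simp
              linear_combination hn2
            rw [hn2, hneq, map_mul, hinv2, hχb]
            simp [hχdef]
          · rcases quadraticChar_dichotomy hn0 with hA | hA <;>
              rcases quadraticChar_dichotomy hn2 with hB | hB <;>
              rw [hχdef] at *
            · exact absurd ⟨hA, hB⟩ hn.2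
            · rw [hB]; ring
            · rw [hA]; ring
            · rw [hA]; ring
      rw [hfirst, hsecond]
    have := hsplit.symm.trans hsum
    linarith
  have hA0A : (A0.card : ℤ) ≤ A.card + 4 := by
    have hsub : A0 ⊆ A ∪ {b1, b2, 2*a - b1, 2*a - b2} := by
      intro m hm
      rw [hA0def, mem_filter] at hm
      by_cases hc1 : m = b1
      · exact Finset.mem_union_right _ (by simp [hc1])
      by_cases hc2 : m = b2
      · exact Finset.mem_union_right _ (by simp [hc2])
      by_cases hc3 : m = 2*a - b1
      · exact Finset.mem_union_right _ (by simp [hc3])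
      by_cases hc4 : m = 2*a - b2
      · exact Finset.mem_union_right _ (by simp [hc4])
      apply Finset.mem_union_left
      rw [hAdef, mem_filter]
      refine ⟨mem_univ _, (hmem m).mpr ⟨hm.2.1, hc1, hc2⟩, (hmem _).mpr ⟨hm.2.2, ?_, ?_⟩⟩
      · intro h; exact hc3 (by linear_combination -h)
      · intro h; exact hc4 (by linear_combination -h)
    have h1 := Finset.card_le_card hsub
    have h2 := Finset.card_union_le A ({b1, b2, 2*a - b1, 2*a - b2} : Finset (ZMod p))
    have h3 := Finset.card_insert_le b1 ({b2, 2*a - b1, 2*a - b2} : Finset (ZMod p))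
    have h4 := Finset.card_insert_le b2 ({2*a - b1, 2*a - b2} : Finset (ZMod p))
    have h5 := Finset.card_insert_le (2*a - b1) ({2*a - b2} : Finset (ZMod p))
    have h6 := Finset.card_singleton (2*a - b2)
    have : A0.card ≤ A.card + 4 := by omega
    exact_mod_cast this
  have hB0B : (B0.card : ℤ) ≤ B.card + 4 := by
    have hsub : B0 ⊆ B ∪ {b1, b2, 2⁻¹ * (b + b1), 2⁻¹ * (b + b2)} := by
      intro n hn
      rw [hB0def, mem_filter] at hn
      by_cases hc1 : n = b1
      · exact Finset.mem_union_right _ (by simp [hc1])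
      by_cases hc2 : n = b2
      · exact Finset.mem_union_right _ (by simp [hc2])
      by_cases hc3 : n = 2⁻¹ * (b + b1)
      · exact Finset.mem_union_right _ (by simp [hc3])
      by_cases hc4 : n = 2⁻¹ * (b + b2)
      · exact Finset.mem_union_right _ (by simp [hc4])
      apply Finset.mem_union_left
      rw [hBdef, mem_filter]
      refine ⟨mem_univ _, (hmem n).mpr ⟨hn.2.1, hc1, hc2⟩, (hmem _).mpr ⟨hn.2.2, ?_, ?_⟩⟩
      · intro h
        apply hc3
        have h2 : (2 : ZMod p) * n = 2 * (2⁻¹ * (b + b1)) := by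
          rw [← mul_assoc, mul_inv_cancel₀ htwo, one_mul]
          linear_combination h
        exact mul_left_cancel₀ htwo h2
      · intro h
        apply hc4
        have h2 : (2 : ZMod p) * n = 2 * (2⁻¹ * (b + b2)) := by
          rw [← mul_assoc, mul_inv_cancel₀ htwo, one_mul]
          linear_combination h
        exact mul_left_cancel₀ htwo h2
    have h1 := Finset.card_le_card hsub
    have h2 := Finset.card_union_le B ({b1, b2, 2⁻¹ * (b + b1), 2⁻¹ * (b + b2)} : Finset (ZMod p))
    have h3 := Finset.card_insert_le b1 ({b2, 2⁻¹ * (b + b1), 2⁻¹ * (b + b2)} : Finset (ZMod p))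
    have h4 := Finset.card_insert_le b2 ({2⁻¹ * (b + b1), 2⁻¹ * (b + b2)} : Finset (ZMod p))
    have h5 := Finset.card_insert_le (2⁻¹ * (b + b1)) ({2⁻¹ * (b + b2)} : Finset (ZMod p))
    have h6 := Finset.card_singleton (2⁻¹ * (b + b2))
    have : B0.card ≤ B.card + 4 := by omega
    exact_mod_cast this
  set S2 : ℤ := ∑ m ∈ A, ∑ n ∈ B, χ (2*m - n) with hS2def
  have hS2sq : S2^2 ≤ (A.card : ℤ) * ((p : ℤ) * B.card - (B.card : ℤ)^2) := by
    have hinner : ∀ n n' : ZMod p, ∑ m : ZMod p, χ (2*m - n) * χ (2*m - n')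
        = if n = n' then (p : ℤ) - 1 else -1 := by
      intro n n'
      have hre : ∑ m : ZMod p, χ (2*m - n) * χ (2*m - n')
          = ∑ t : ZMod p, χ t * χ (t - (n' - n)) := by
        apply Fintype.sum_equiv ((Equiv.mulLeft₀ (2 : ZMod p) htwo).trans (Equiv.subRight n))
        intro m
        have he : ((Equiv.mulLeft₀ (2 : ZMod p) htwo).trans (Equiv.subRight n)) m
            = 2 * m - n := rfl
        rw [he]
        congr 1
        ring
      rw [hre]
      by_cases h : n = n'
      · subst h
        rw [if_pos rfl]
        simp only [sub_self, sub_zero]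
        rw [diag_aux, ZMod.card p]
      · rw [if_neg h]
        exact jacobi_aux2 hchar (sub_ne_zero.mpr (fun hh => h hh.symm))
    have hsw : ∑ m : ZMod p, (∑ n ∈ B, χ (2*m - n))^2
        = (p : ℤ) * B.card - (B.card : ℤ)^2 := by
      have hg2 : ∀ m : ZMod p, (∑ n ∈ B, χ (2*m - n))^2
          = ∑ n ∈ B, ∑ n' ∈ B, χ (2*m - n) * χ (2*m - n') := by
        intro m
        rw [sq, Finset.sum_mul_sum]
      rw [Finset.sum_congr rfl (fun m _ => hg2 m), Finset.sum_comm]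
      have hstep : ∀ n ∈ B, ∑ m : ZMod p, ∑ n' ∈ B, χ (2*m - n) * χ (2*m - n')
          = (p : ℤ) - B.card := by
        intro n hn
        rw [Finset.sum_comm]
        rw [Finset.sum_congr rfl (fun n' _ => hinner n n')]
        have hsplit2 : ∀ n' : ZMod p, (if n = n' then (p : ℤ) - 1 else -1)
            = -1 + (if n = n' then (p : ℤ) else 0) := by
          intro n'; split <;> ring
        rw [Finset.sum_congr rfl (fun n' _ => hsplit2 n'), Finset.sum_add_distrib,
          Finset.sum_const, Finset.sum_ite_eq B n (fun _ => (p : ℤ)), if_pos hn,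
          nsmul_eq_mul]
        ring
      rw [Finset.sum_congr rfl hstep, Finset.sum_const, nsmul_eq_mul]
      ring
    have hCS : S2^2 ≤ (A.card : ℤ) * ∑ m ∈ A, (∑ n ∈ B, χ (2*m - n))^2 := by
      have h := sq_sum_le_card_mul_sum_sq (s := A) (f := fun m => ∑ n ∈ B, χ (2*m - n))
      exact_mod_cast h
    have hmono : ∑ m ∈ A, (∑ n ∈ B, χ (2*m - n))^2
        ≤ ∑ m : ZMod p, (∑ n ∈ B, χ (2*m - n))^2 :=
      Finset.sum_le_sum_of_subset_of_nonneg (Finset.subset_univ A)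
        (fun _ _ _ => sq_nonneg _)
    calc S2^2 ≤ (A.card : ℤ) * ∑ m ∈ A, (∑ n ∈ B, χ (2*m - n))^2 := hCS
      _ ≤ (A.card : ℤ) * ∑ m : ZMod p, (∑ n ∈ B, χ (2*m - n))^2 := by
          apply mul_le_mul_of_nonneg_left hmono (by positivity)
      _ = (A.card : ℤ) * ((p : ℤ) * B.card - (B.card : ℤ)^2) := by rw [hsw]
  set G : Finset (ZMod p × ZMod p) := (A ×ˢ B).filter (fun q => 2*q.1 - q.2 ∈ Rp' p) with hGdef
  have hGood : (A.card : ℤ) * B.card + S2 ≤ 2 * G.card + 5 * A.card := by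
    have hpoint : ∀ x : ZMod p, 1 + χ x ≤ (if x ∈ Rp' p then (2:ℤ) else 0)
        + ((if x = 0 then (1:ℤ) else 0) + ((if x = b1 then (2:ℤ) else 0)
        + (if x = b2 then (2:ℤ) else 0))) := by
      intro x
      have n1 : (0:ℤ) ≤ if x ∈ Rp' p then (2:ℤ) else 0 := by split <;> norm_num
      have n2 : (0:ℤ) ≤ if x = 0 then (1:ℤ) else 0 := by split <;> norm_num
      have n3 : (0:ℤ) ≤ if x = b1 then (2:ℤ) else 0 := by split <;> norm_num
      have n4 : (0:ℤ) ≤ if x = b2 then (2:ℤ) else 0 := by split <;> norm_num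
      by_cases hx : x ∈ Rp' p
      · rw [if_pos hx]
        linarith [hχle x]
      by_cases hx0 : x = 0
      · subst hx0
        rw [if_pos rfl]
        have : χ (0 : ZMod p) = 0 := by simp [hχdef]
        linarith
      by_cases hxb1 : x = b1
      · rw [if_pos hxb1]
        linarith [hχle x]
      by_cases hxb2 : x = b2
      · rw [if_pos hxb2]
        linarith [hχle x]
      have hne1 : χ x ≠ 1 := fun h => hx ((hmem x).mpr ⟨h, hxb1, hxb2⟩)
      rcases quadraticChar_dichotomy hx0 with hA | hA
      · exact absurd hA hne1
      · rw [show χ x = -1 from hA]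
        linarith
    have hsum1 : ∑ _q ∈ A ×ˢ B, (1 : ℤ) = (A.card : ℤ) * B.card := by
      rw [Finset.sum_const, Finset.card_product, nsmul_eq_mul]
      push_cast
      ring
    have hsum2 : ∑ q ∈ A ×ˢ B, χ (2*q.1 - q.2) = S2 := by
      rw [hS2def, Finset.sum_product]
    have hG2 : ∑ q ∈ A ×ˢ B, (if 2*q.1 - q.2 ∈ Rp' p then (2:ℤ) else 0)
        = 2 * G.card := by
      rw [← Finset.sum_filter, ← hGdef, Finset.sum_const, nsmul_eq_mul]
      ring
    have hline : ∀ (c : ZMod p) (k : ℤ), 0 ≤ k →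
        ∑ q ∈ A ×ˢ B, (if 2*q.1 - q.2 = c then k else 0) ≤ k * A.card := by
      intro c k hk
      rw [← Finset.sum_filter, Finset.sum_const, nsmul_eq_mul]
      have hcard2 : ((A ×ˢ B).filter (fun q => 2*q.1 - q.2 = c)).card ≤ A.card := by
        apply Finset.card_le_card_of_injOn (fun q => q.1)
        · intro q hq
          rw [Finset.mem_coe, Finset.mem_filter, Finset.mem_product] at hq
          exact hq.1.1
        · intro q hq q' hq' hfe
          simp only [Finset.coe_filter, Set.mem_setOf_eq, Finset.mem_product] at hq hq'
          have h2 : q.2 = q'.2 := by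
            have e1 : 2 * q.1 - q.2 = c := hq.2
            have e2 : 2 * q'.1 - q'.2 = c := hq'.2
            have : (q.1 : ZMod p) = q'.1 := hfe
            linear_combination -e1 + e2 + 2 * this
          exact Prod.ext hfe h2
      calc (((A ×ˢ B).filter (fun q => 2*q.1 - q.2 = c)).card : ℤ) * k
          ≤ (A.card : ℤ) * k := by
            apply mul_le_mul_of_nonneg_right _ hk
            exact_mod_cast hcard2
        _ = k * A.card := by ring
    calc (A.card : ℤ) * B.card + S2
        = ∑ q ∈ A ×ˢ B, (1 + χ (2*q.1 - q.2)) := by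
          rw [Finset.sum_add_distrib, hsum1, hsum2]
      _ ≤ ∑ q ∈ A ×ˢ B, ((if 2*q.1 - q.2 ∈ Rp' p then (2:ℤ) else 0)
          + ((if 2*q.1 - q.2 = 0 then (1:ℤ) else 0)
          + ((if 2*q.1 - q.2 = b1 then (2:ℤ) else 0)
          + (if 2*q.1 - q.2 = b2 then (2:ℤ) else 0)))) :=
          Finset.sum_le_sum (fun q _ => hpoint (2*q.1 - q.2))
      _ = (∑ q ∈ A ×ˢ B, (if 2*q.1 - q.2 ∈ Rp' p then (2:ℤ) else 0))
          + ((∑ q ∈ A ×ˢ B, (if 2*q.1 - q.2 = 0 then (1:ℤ) else 0))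
          + ((∑ q ∈ A ×ˢ B, (if 2*q.1 - q.2 = b1 then (2:ℤ) else 0))
          + (∑ q ∈ A ×ˢ B, (if 2*q.1 - q.2 = b2 then (2:ℤ) else 0)))) := by
          rw [Finset.sum_add_distrib, Finset.sum_add_distrib, Finset.sum_add_distrib]
      _ ≤ 2 * G.card + (1 * A.card + (2 * A.card + 2 * A.card)) := by
          have l1 := hline 0 1 (by norm_num)
          have l2 := hline b1 2 (by norm_num)
          have l3 := hline b2 2 (by norm_num)
          rw [hG2]
          gcongr
      _ ≤ 2 * G.card + 5 * A.card := by linarith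
  have hGne : G.Nonempty := by
    rw [← Finset.card_pos]
    by_contra hcon
    push_neg at hcon
    have hG0 : (G.card : ℤ) = 0 := by exact_mod_cast Nat.le_zero.mp (by omega)
    have hα : (424 : ℤ) ≤ A.card := by omega
    have hβ : (424 : ℤ) ≤ B.card := by omega
    have hβp : (B.card : ℤ) ≤ p := by
      have h := Finset.card_le_univ B
      have h2 : Fintype.card (ZMod p) = p := ZMod.card p
      rw [h2] at h
      exact_mod_cast h
    have hpβ : (p : ℤ) ≤ 4 * B.card + 17 := by omega
    set α : ℤ := (A.card : ℤ) with hαdef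
    set β : ℤ := (B.card : ℤ) with hβdef
    have hS2neg : S2 ≤ 5 * α - α * β := by linarith [hGood]
    have h5 : 0 ≤ α * β - 5 * α := by nlinarith
    have habs : (α * β - 5 * α) * (α * β - 5 * α) ≤ (-S2) * (-S2) :=
      mul_self_le_mul_self h5 (by linarith)
    have hup : S2^2 ≤ α * β * ((p : ℤ)) := by nlinarith [hS2sq]
    have e1 : (α * β - 5 * α)^2 ≤ α * (β * (4 * β + 17)) := by nlinarith [hup, habs, hpβ, h5]
    have hq : 0 < 424 * (β - 5)^2 - β * (4 * β + 17) := by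
      nlinarith [mul_nonneg (show (0:ℤ) ≤ β - 424 by linarith) (show (0:ℤ) ≤ β by linarith)]
    nlinarith [e1, mul_pos (show (0:ℤ) < α by linarith) hq,
      mul_nonneg (mul_nonneg (show (0:ℤ) ≤ α - 424 by linarith) (show (0:ℤ) ≤ α by linarith))
        (sq_nonneg (β - 5))]
  obtain ⟨⟨m, n⟩, hmn⟩ := hGne
  rw [hGdef, Finset.mem_filter, Finset.mem_product] at hmn
  obtain ⟨⟨hmA, hnB⟩, hmn2⟩ := hmn
  rw [hAdef, Finset.mem_filter] at hmA
  rw [hBdef, Finset.mem_filter] at hnB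
  exact ⟨m, n, hmA.2, hnB.2, hmn2⟩

lemma two_mul_ne_three (p : ℕ) [Fact p.Prime] (hp : 1711 ≤ p) {x : ZMod p}
    (hx : x ∈ Rp' p) : 2 * x ≠ 3 := by
  have hp' : p.Prime := Fact.out
  have hodd : p % 2 = 1 := Nat.odd_iff.mp (hp'.odd_of_ne_two (by omega))
  have hchar : ringChar (ZMod p) ≠ 2 := by
    rw [ZMod.ringChar_zmod_n p]; omega
  have htwo : (2 : ZMod p) ≠ 0 := Ring.two_ne_zero hchar
  have hb1 : 2 * (((p + 3) / 2 : ℕ) : ZMod p) = 3 := by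
    have h : (p + 3) / 2 * 2 = p + 3 := Nat.div_mul_cancel (by omega)
    have h2 : ((((p + 3) / 2) * 2 : ℕ) : ZMod p) = (((p + 3 : ℕ)) : ZMod p) := by rw [h]
    push_cast at h2
    rw [ZMod.natCast_self] at h2
    linear_combination h2
  intro hcon
  exact hx.2.1 (mul_left_cancel₀ htwo (hcon.trans hb1.symm))

/-- The edge relation of the digraph `D` on `R'`: every triple `x, y, z ∈ R'` with
`2x = y + z ≠ 3` contributes edges `(x,y)` and `(x,z)`, and every `y ≠ z` in `R'`
with `y + z = 3` contributes edges `(1,y)` and `(1,z)`. -/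
def DEdge (p : ℕ) (x y : ZMod p) : Prop :=
  x ∈ Rp' p ∧ y ∈ Rp' p ∧
    ((∃ z ∈ Rp' p, 2 * x = y + z ∧ y + z ≠ 3) ∨
      (x = 1 ∧ ∃ z ∈ Rp' p, y ≠ z ∧ y + z = 3))

theorem stmt_15 (p : ℕ) [Fact p.Prime] (hp : 1711 ≤ p)
    (h1 : IsQR p (-1)) (h2 : ¬ IsQR p 2) (h3 : ¬ IsQR p 3) :
    ∀ a ∈ Rp' p, ∀ b ∈ Rp' p, Relation.ReflTransGen (DEdge p) a b := by
  intro a ha b hb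
  obtain ⟨m, n, ⟨hm, ham⟩, ⟨hn, hnb⟩, hmn⟩ := exists_path p hp h1 h2 h3 ha hb
  have e1 : DEdge p a m :=
    ⟨ha, hm, Or.inl ⟨2*a - m, ham, by ring, by
      rw [show m + (2*a - m) = 2*a by ring]; exact two_mul_ne_three p hp ha⟩⟩
  have e2 : DEdge p m n :=
    ⟨hm, hn, Or.inl ⟨2*m - n, hmn, by ring, by
      rw [show n + (2*m - n) = 2*m by ring]; exact two_mul_ne_three p hp hm⟩⟩
  have e3 : DEdge p n b :=
    ⟨hn, hb, Or.inl ⟨2*n - b, hnb, by ring, by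
      rw [show b + (2*n - b) = 2*n by ring]; exact two_mul_ne_three p hp hn⟩⟩
  exact (Relation.ReflTransGen.single e1).trans
    ((Relation.ReflTransGen.single e2).trans (Relation.ReflTransGen.single e3))
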